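/- Let ‖·‖ be a seminorm on the real vector space of finitely supported functions [0,T] → ℝ and suppose A := sup{‖ζ‖ : ζ a ±1-valued event sequence on [0,T] with ‖ζ‖_D = 1} is finite. Then every ±1-valued event sequence η on [0,T] satisfies ‖η‖ ≤ A·‖η‖_D. -/

import Mathlib

open Set Function Filter Classical

/-- The next SOD sampling time after time `s` for input `f`, threshold `θ`, on `[0,T]`:
the infimum of `{t ∈ (s,T] : |f t - f s| ≥ θ}` if this set is nonempty, `none` otherwise. -/
noncomputable def sodNext (T θ : ℝ) (f : ℝ → ℝ) (s : ℝ) : Option ℝ :=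
  if (∃ t ∈ Set.Ioc s T, θ ≤ |f t - f s|) then
    some (sInf {t | t ∈ Set.Ioc s T ∧ θ ≤ |f t - f s|})
  else none

/-- The `k`-th SOD sampling time (`t_0 = 0`), `none` if the recursion has stopped before `k`. -/
noncomputable def sodTime (T θ : ℝ) (f : ℝ → ℝ) : ℕ → Option ℝ
  | 0 => some 0
  | n + 1 => (sodTime T θ f n).bind (sodNext T θ f)

/-- The SOD output event sequence `Φ_θ(f)` : it takes the value `f t_k - f t_{k-1}` at
each sampling time `t_k`, `k ≥ 1`, and `0` elsewhere. -/
noncomputable def sodOut (T θ : ℝ) (f : ℝ → ℝ) : ℝ → ℝ := fun t =>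
  if h : ∃ k : ℕ, ∃ s : ℝ, sodTime T θ f k = some s ∧ sodNext T θ f s = some t
  then f t - f h.choose_spec.choose
  else 0

/-- Membership in `F[0,T]`: continuous on `[0,T]` with `f 0 = 0`. -/
def memF (T : ℝ) (f : ℝ → ℝ) : Prop :=
  ContinuousOn f (Set.Icc 0 T) ∧ f 0 = 0

/-- An event sequence on `[0,T]`: finitely supported with support in `[0,T]`. -/
def IsEventSeq (T : ℝ) (η : ℝ → ℝ) : Prop :=
  (Function.support η).Finite ∧ Function.support η ⊆ Set.Icc 0 T

/-- `η` is `±1`-valued on its support. -/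
def IsPM (η : ℝ → ℝ) : Prop :=
  ∀ t ∈ Function.support η, η t = 1 ∨ η t = -1

/-- Weyl's discrepancy norm `‖η‖_D = sup_{0 ≤ a ≤ b ≤ T} |Σ_{t ∈ [a,b]} η t|`. -/
noncomputable def discNorm (T : ℝ) (η : ℝ → ℝ) : ℝ :=
  sSup {x | ∃ a b : ℝ, 0 ≤ a ∧ a ≤ b ∧ b ≤ T ∧ x = |∑ᶠ t ∈ Set.Icc a b, η t|}

/-- Alexiewicz norm `‖η‖_A = sup_{a ∈ [0,T]} |Σ_{t ∈ [0,a]} η t|`. -/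
noncomputable def alexNorm (T : ℝ) (η : ℝ → ℝ) : ℝ :=
  sSup {x | ∃ a : ℝ, 0 ≤ a ∧ a ≤ T ∧ x = |∑ᶠ t ∈ Set.Icc 0 a, η t|}

/-- The values of `η` at consecutive support points alternate in sign. -/
def Alternating (η : ℝ → ℝ) : Prop :=
  ∀ s u : ℝ, s ∈ Function.support η → u ∈ Function.support η → s < u →
    (∀ t ∈ Function.support η, ¬ (s < t ∧ t < u)) → η s * η u < 0

/-- One `(+−)`-transcription step: erase a `+1` followed (with no support in between) by a `−1`. -/
def StepPM (η η' : ℝ → ℝ) : Prop :=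
  ∃ s u : ℝ, s < u ∧ η s = 1 ∧ η u = -1 ∧ (∀ t : ℝ, s < t → t < u → η t = 0) ∧
    η' = Function.update (Function.update η s 0) u 0

/-- One `(−+)`-transcription step: erase a `−1` followed (with no support in between) by a `+1`. -/
def StepMP (η η' : ℝ → ℝ) : Prop :=
  ∃ s u : ℝ, s < u ∧ η s = -1 ∧ η u = 1 ∧ (∀ t : ℝ, s < t → t < u → η t = 0) ∧
    η' = Function.update (Function.update η s 0) u 0

/-- `StepsN R n x y` : `y` is obtained from `x` by `n` successive `R`-steps. -/
def StepsN (R : (ℝ → ℝ) → (ℝ → ℝ) → Prop) : ℕ → (ℝ → ℝ) → (ℝ → ℝ) → Prop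
  | 0, x, y => x = y
  | n + 1, x, z => ∃ y, R x y ∧ StepsN R n y z

/-- Uniform distance `‖f − g‖_∞` over `[0,T]`. -/
noncomputable def unifDist (T : ℝ) (f g : ℝ → ℝ) : ℝ :=
  sSup {x | ∃ t ∈ Set.Icc 0 T, x = |f t - g t|}

/-! ### Auxiliary lemmas -/

private lemma seminorm_sum_le' {ι : Type*} (p : Seminorm ℝ (ℝ → ℝ)) (s : Finset ι)
    (f : ι → ℝ → ℝ) : p (∑ i ∈ s, f i) ≤ ∑ i ∈ s, p (f i) := by
  classical
  induction s using Finset.induction with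
  | empty => simp
  | @insert a s h ih =>
    rw [Finset.sum_insert h, Finset.sum_insert h]
    exact (map_add_le_add p _ _).trans (by linarith)

private lemma finsum_Icc_eq' (η : ℝ → ℝ) (hfin : (Function.support η).Finite) (a b : ℝ) :
    ∑ᶠ t ∈ Set.Icc a b, η t = ∑ t ∈ hfin.toFinset.filter (· ∈ Set.Icc a b), η t := by
  rw [finsum_mem_eq_sum η (by
    apply hfin.subset
    intro x hx
    exact hx.2)]
  congr 1
  ext t
  simp [Set.Finite.mem_toFinset, and_comm]

private lemma alt_sum_le' (η : ℝ → ℝ) (hpm : IsPM η) (halt : Alternating η) :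
    ∀ (m : ℕ) (G : Finset ℝ), G.card = m → (∀ t ∈ G, t ∈ Function.support η) →
    (∀ s ∈ G, ∀ u ∈ G, ∀ t ∈ Function.support η, s ≤ t → t ≤ u → t ∈ G) →
    |∑ t ∈ G, η t| ≤ 1 := by
  intro m
  induction m using Nat.strong_induction_on with
  | _ m ih =>
    intro G hcard hsupp hclosed
    rcases Finset.eq_empty_or_nonempty G with rfl | hne
    · simp
    set M := G.max' hne with hM
    have hMG : M ∈ G := G.max'_mem hne
    rcases Finset.eq_empty_or_nonempty (G.erase M) with he | hne2
    · have : G = {M} := by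
        apply Finset.eq_singleton_iff_unique_mem.mpr
        refine ⟨hMG, fun x hx => ?_⟩
        by_contra hxM
        exact (Finset.ne_empty_of_mem (Finset.mem_erase.mpr ⟨hxM, hx⟩)) he
      rw [this, Finset.sum_singleton]
      rcases hpm M (hsupp M hMG) with h | h <;> rw [h] <;> norm_num
    set M' := (G.erase M).max' hne2 with hM'
    have hM'G : M' ∈ G := Finset.mem_of_mem_erase ((G.erase M).max'_mem hne2)
    have hM'ne : M' ≠ M := (Finset.mem_erase.mp ((G.erase M).max'_mem hne2)).1
    have hlt : M' < M := lt_of_le_of_ne (G.le_max' M' hM'G) hM'ne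
    have hnob : ∀ t ∈ Function.support η, ¬ (M' < t ∧ t < M) := by
      intro t ht ⟨h1, h2⟩
      have htG : t ∈ G := hclosed M' hM'G M hMG t ht h1.le h2.le
      have : t ∈ G.erase M := Finset.mem_erase.mpr ⟨ne_of_lt h2, htG⟩
      exact absurd ((G.erase M).le_max' t this) (not_le.mpr h1)
    have hprod : η M' * η M < 0 :=
      halt M' M (hsupp M' hM'G) (hsupp M hMG) hlt hnob
    have hzero : η M' + η M = 0 := by
      rcases hpm M' (hsupp M' hM'G) with h1 | h1 <;>
        rcases hpm M (hsupp M hMG) with h2 | h2 <;>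
        rw [h1, h2] at hprod ⊢ <;> linarith
    set G'' := (G.erase M).erase M' with hG''
    have hsum : ∑ t ∈ G, η t = ∑ t ∈ G'', η t := by
      have e1 : ∑ t ∈ G.erase M, η t + η M = ∑ t ∈ G, η t :=
        Finset.sum_erase_add G η hMG
      have e2 : ∑ t ∈ G'', η t + η M' = ∑ t ∈ G.erase M, η t :=
        Finset.sum_erase_add _ η ((G.erase M).max'_mem hne2)
      rw [← e1, ← e2]; linarith
    have hcard'' : G''.card = m - 2 := by
      rw [hG'', Finset.card_erase_of_mem ((G.erase M).max'_mem hne2),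
        Finset.card_erase_of_mem hMG, hcard]; omega
    have hmge : 2 ≤ m := by
      have h1 : 0 < (G.erase M).card := Finset.card_pos.mpr hne2
      have := Finset.card_erase_of_mem hMG
      omega
    rw [hsum]
    apply ih (m - 2) (by omega) G'' hcard''
    · intro t ht
      exact hsupp t (Finset.mem_of_mem_erase (Finset.mem_of_mem_erase ht))
    · intro s hs u hu t ht hst htu
      have huG : u ∈ G.erase M := Finset.mem_of_mem_erase hu
      have hune : u ≠ M' := (Finset.mem_erase.mp hu).1
      have hult : u < M' := lt_of_le_of_ne ((G.erase M).le_max' u huG) hune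
      have htG : t ∈ G := hclosed s (Finset.mem_of_mem_erase (Finset.mem_of_mem_erase hs)) u
        (Finset.mem_of_mem_erase huG) t ht hst htu
      refine Finset.mem_erase.mpr ⟨?_, Finset.mem_erase.mpr ⟨?_, htG⟩⟩
      · exact ne_of_lt (lt_of_le_of_lt htu hult)
      · exact ne_of_lt (lt_of_le_of_lt htu (hult.trans hlt))

private lemma discNorm_alt' (T : ℝ) (ζ : ℝ → ℝ) (hev : IsEventSeq T ζ) (hpm : IsPM ζ)
    (halt : Alternating ζ) (t0 : ℝ) (ht0 : ζ t0 ≠ 0) : discNorm T ζ = 1 := by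
  have hub : ∀ x ∈ {x | ∃ a b : ℝ, 0 ≤ a ∧ a ≤ b ∧ b ≤ T ∧ x = |∑ᶠ t ∈ Set.Icc a b, ζ t|},
      x ≤ 1 := by
    rintro x ⟨a, b, ha, hab, hbT, rfl⟩
    rw [finsum_Icc_eq' ζ hev.1 a b]
    apply alt_sum_le' ζ hpm halt _ _ rfl
    · intro t ht
      simpa using (Finset.mem_filter.mp ht).1
    · intro s hs u hu t ht hst htu
      simp only [Finset.mem_filter, Set.Finite.mem_toFinset, Set.mem_Icc] at hs hu ⊢
      exact ⟨ht, hs.2.1.trans hst, htu.trans hu.2.2⟩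
  have hmem : (1 : ℝ) ∈ {x | ∃ a b : ℝ, 0 ≤ a ∧ a ≤ b ∧ b ≤ T ∧
      x = |∑ᶠ t ∈ Set.Icc a b, ζ t|} := by
    have ht0T : t0 ∈ Set.Icc 0 T := hev.2 ht0
    refine ⟨t0, t0, ht0T.1, le_refl _, ht0T.2, ?_⟩
    rw [Set.Icc_self, finsum_mem_singleton]
    rcases hpm t0 ht0 with h | h <;> rw [h] <;> norm_num
  exact le_antisymm (Real.sSup_le hub zero_le_one) (le_csSup ⟨1, hub⟩ hmem)

private lemma enum' (F : Finset ℝ) : ∃ g : ℕ → ℝ,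
    (∀ a b, a < b → b < F.card → g a < g b) ∧
    (∀ t, t ∈ F ↔ ∃ k, k < F.card ∧ g k = t) := by
  classical
  set o := F.orderIsoOfFin rfl with ho
  refine ⟨fun k => if h : k < F.card then (o ⟨k, h⟩ : ℝ) else 0, ?_, ?_⟩
  · intro a b hab hb
    have ha : a < F.card := hab.trans hb
    simp only [dif_pos ha, dif_pos hb]
    exact_mod_cast o.strictMono (show (⟨a, ha⟩ : Fin F.card) < ⟨b, hb⟩ from hab)
  · intro t
    constructor
    · intro ht
      refine ⟨(o.symm ⟨t, ht⟩ : Fin F.card), (o.symm ⟨t, ht⟩).2, ?_⟩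
      simp only [dif_pos (o.symm ⟨t, ht⟩).2]
      have : o (o.symm ⟨t, ht⟩) = ⟨t, ht⟩ := o.apply_symm_apply _
      simp only [Fin.eta, this]
    · rintro ⟨k, hk, rfl⟩
      simp only [dif_pos hk]
      exact (o ⟨k, hk⟩).2

private lemma decomp' (T : ℝ) (η : ℝ → ℝ) (hev : IsEventSeq T η) (hpm : IsPM η)
    (t0 : ℝ) (ht0 : η t0 ≠ 0) :
    ∃ (L : Finset ℤ) (ζ : ℤ → ℝ → ℝ),
      L.Nonempty ∧ (η = ∑ i ∈ L, ζ i) ∧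
      (∀ i ∈ L, IsEventSeq T (ζ i) ∧ IsPM (ζ i) ∧ Alternating (ζ i) ∧ ∃ s, ζ i s ≠ 0) ∧
      ((L.card : ℝ) ≤ discNorm T η) := by
  classical
  obtain ⟨g, hmono, hmem0⟩ := enum' hev.1.toFinset
  set n := hev.1.toFinset.card with hn
  have hmem : ∀ t : ℝ, η t ≠ 0 ↔ ∃ k, k < n ∧ g k = t := by
    intro t
    rw [← hmem0 t, Set.Finite.mem_toFinset, Function.mem_support]
  have hgsupp : ∀ k, k < n → η (g k) ≠ 0 := fun k hk => (hmem _).mpr ⟨k, hk, rfl⟩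
  have hmono' : ∀ a b, a ≤ b → b < n → g a ≤ g b := by
    intro a b hab hb
    rcases eq_or_lt_of_le hab with rfl | h
    · exact le_refl _
    · exact (hmono a b h hb).le
  have hinj : ∀ a b, a < n → b < n → g a = g b → a = b := by
    intro a b ha hb hgab
    rcases lt_trichotomy a b with h | h | h
    · exact absurd hgab (ne_of_lt (hmono a b h hb))
    · exact h
    · exact absurd hgab.symm (ne_of_lt (hmono b a h ha))
  obtain ⟨e, he⟩ : ∃ e : ℕ → ℤ, ∀ k, e k = if η (g k) = 1 then 1 else -1 :=
    ⟨_, fun _ => rfl⟩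
  obtain ⟨Sp, hSpdef⟩ : ∃ Sp : ℕ → ℤ, ∀ k, Sp k = ∑ i ∈ Finset.range k, e i :=
    ⟨_, fun _ => rfl⟩
  obtain ⟨lay, hlaydef⟩ : ∃ lay : ℕ → ℤ, ∀ k, lay k = max (Sp k) (Sp (k + 1)) :=
    ⟨_, fun _ => rfl⟩
  have hepm : ∀ k, e k = 1 ∨ e k = -1 := by
    intro k
    rw [he]
    by_cases h : η (g k) = 1 <;> simp [h]
  have hcast : ∀ k, k < n → (e k : ℝ) = η (g k) := by
    intro k hk
    rcases hpm (g k) (hgsupp k hk) with h | h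
    · rw [he, if_pos h, h]; norm_num
    · have h1 : ¬ (η (g k) = 1) := by rw [h]; norm_num
      rw [he, if_neg h1, h]; norm_num
  have hstep : ∀ k, Sp (k + 1) = Sp k + e k := by
    intro k
    rw [hSpdef, hSpdef, Finset.sum_range_succ]
  obtain ⟨layF, hlayF⟩ : ∃ layF : ℝ → ℤ, ∀ k, k < n → layF (g k) = lay k := by
    refine ⟨fun t => if h : ∃ k, k < n ∧ g k = t then lay h.choose else 0, fun k hk => ?_⟩
    have h : ∃ k', k' < n ∧ g k' = g k := ⟨k, hk, rfl⟩
    simp only [dif_pos h]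
    congr 1
    exact hinj _ _ h.choose_spec.1 hk h.choose_spec.2
  obtain ⟨ζ, hζ⟩ : ∃ ζ : ℤ → ℝ → ℝ,
      ∀ i t, ζ i t = if η t ≠ 0 ∧ layF t = i then η t else 0 := ⟨_, fun _ _ => rfl⟩
  have hζsupp : ∀ i t, ζ i t ≠ 0 ↔ (η t ≠ 0 ∧ layF t = i) := by
    intro i t
    rw [hζ]
    split_ifs with h
    · exact iff_of_true h.1 h
    · exact iff_of_false (by simp) h
  have hζval : ∀ i t, ζ i t ≠ 0 → ζ i t = η t := by
    intro i t h
    rw [hζ, if_pos ((hζsupp i t).mp h)]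
  set L := (Finset.range n).image lay with hL
  obtain ⟨k0, hk0, hgk0⟩ := (hmem t0).mp ht0
  -- the support of each ζ i is contained in support η
  have hζsub : ∀ i, Function.support (ζ i) ⊆ Function.support η := by
    intro i t ht
    exact Function.mem_support.mpr ((hζsupp i t).mp (Function.mem_support.mp ht)).1
  refine ⟨L, ζ, ⟨lay k0, Finset.mem_image_of_mem lay (Finset.mem_range.mpr hk0)⟩, ?_, ?_, ?_⟩
  · -- η = ∑ i ∈ L, ζ i
    funext t
    rw [Finset.sum_apply]
    by_cases hηt : η t = 0
    · rw [hηt]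
      symm
      apply Finset.sum_eq_zero
      intro i _
      rw [hζ, if_neg (by tauto)]
    · obtain ⟨k, hk, rfl⟩ := (hmem t).mp hηt
      have hin : layF (g k) ∈ L := by
        rw [hlayF k hk]
        exact Finset.mem_image_of_mem lay (Finset.mem_range.mpr hk)
      have hcongr : ∀ i ∈ L, ζ i (g k) = if layF (g k) = i then η (g k) else 0 := by
        intro i _
        rw [hζ]
        by_cases h : layF (g k) = i
        · rw [if_pos ⟨hηt, h⟩, if_pos h]
        · rw [if_neg (by tauto), if_neg h]
      rw [Finset.sum_congr rfl hcongr, Finset.sum_ite_eq L (layF (g k)), if_pos hin]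
  · -- properties of each layer
    intro i hi
    obtain ⟨k1, hk1r, hk1⟩ := Finset.mem_image.mp hi
    have hk1n : k1 < n := Finset.mem_range.mp hk1r
    refine ⟨⟨hev.1.subset (hζsub i), (hζsub i).trans hev.2⟩, ?_, ?_, ⟨g k1, ?_⟩⟩
    · -- IsPM
      intro t ht
      rw [hζval i t (Function.mem_support.mp ht)]
      exact hpm t (hζsub i ht)
    · -- Alternating
      intro s u hs hu hsu hbtw
      obtain ⟨hηs, hlays⟩ := (hζsupp i s).mp (Function.mem_support.mp hs)
      obtain ⟨hηu, hlayu⟩ := (hζsupp i u).mp (Function.mem_support.mp hu)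
      obtain ⟨a, han, rfl⟩ := (hmem s).mp hηs
      obtain ⟨b, hbn, rfl⟩ := (hmem u).mp hηu
      have hab : a < b := by
        by_contra h
        push_neg at h
        exact absurd hsu (not_lt.mpr (hmono' b a h han))
      rw [hlayF a han] at hlays
      rw [hlayF b hbn] at hlayu
      rw [hζval i _ (Function.mem_support.mp hs), hζval i _ (Function.mem_support.mp hu),
        ← hcast a han, ← hcast b hbn]
      have hcross : ∀ kk, a < kk → kk < b → lay kk = i → False := by
        intro kk h1 h2 h3
        have hkkn : kk < n := h2.trans hbn
        have hsupkk : ζ i (g kk) ≠ 0 :=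
          (hζsupp i (g kk)).mpr ⟨hgsupp kk hkkn, by rw [hlayF kk hkkn, h3]⟩
        exact hbtw (g kk) (Function.mem_support.mpr hsupkk)
          ⟨hmono a kk h1 hkkn, hmono kk b h2 hbn⟩
      have hstepa := hstep a
      have hstepb := hstep b
      have hlaya' := hlaydef a
      have hlayb' := hlaydef b
      rcases hepm a with ha1 | ha1 <;> rcases hepm b with hb1 | hb1
      · -- e a = 1, e b = 1 : contradiction
        exfalso
        have hia : Sp (a + 1) = i := by omega
        have hib : Sp b = i - 1 := by omega
        have hab1 : a + 1 < b := by
          rcases Nat.lt_or_ge (a + 1) b with h | h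
          · exact h
          · exfalso
            have hba : b = a + 1 := by omega
            rw [hba] at hib
            omega
        have hKne : (((Finset.Ico (a + 1) b).filter (fun k => i ≤ Sp k))).Nonempty :=
          ⟨a + 1, Finset.mem_filter.mpr ⟨Finset.mem_Ico.mpr ⟨le_refl _, hab1⟩, by omega⟩⟩
        obtain ⟨kk, hkkmem, hkkmax⟩ :
            ∃ kk ∈ (Finset.Ico (a + 1) b).filter (fun k => i ≤ Sp k),
              ∀ x ∈ (Finset.Ico (a + 1) b).filter (fun k => i ≤ Sp k), x ≤ kk :=
          ⟨_, Finset.max'_mem _ hKne, fun x hx => Finset.le_max' _ x hx⟩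
        rw [Finset.mem_filter, Finset.mem_Ico] at hkkmem
        obtain ⟨⟨hak, hkb⟩, hSkk⟩ := hkkmem
        have hnext : Sp (kk + 1) < i := by
          by_cases h : kk + 1 = b
          · rw [h]; omega
          · by_contra hcon
            push_neg at hcon
            have := hkkmax (kk + 1) (Finset.mem_filter.mpr
              ⟨Finset.mem_Ico.mpr ⟨by omega, by omega⟩, hcon⟩)
            omega
        have hstepk := hstep kk
        have hlayk := hlaydef kk
        rcases hepm kk with h | h
        · omega
        · exact hcross kk (by omega) hkb (by omega)
      · rw [ha1, hb1]; norm_num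
      · rw [ha1, hb1]; norm_num
      · -- e a = -1, e b = -1 : contradiction
        exfalso
        have hia : Sp a = i := by omega
        have hia' : Sp (a + 1) = i - 1 := by omega
        have hib : Sp b = i := by omega
        have hab1 : a + 1 < b := by
          rcases Nat.lt_or_ge (a + 1) b with h | h
          · exact h
          · exfalso
            have hba : b = a + 1 := by omega
            rw [hba] at hib
            omega
        have hKne : (((Finset.Ico (a + 1) b).filter (fun k => Sp k ≤ i - 1))).Nonempty :=
          ⟨a + 1, Finset.mem_filter.mpr ⟨Finset.mem_Ico.mpr ⟨le_refl _, hab1⟩, by omega⟩⟩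
        obtain ⟨kk, hkkmem, hkkmax⟩ :
            ∃ kk ∈ (Finset.Ico (a + 1) b).filter (fun k => Sp k ≤ i - 1),
              ∀ x ∈ (Finset.Ico (a + 1) b).filter (fun k => Sp k ≤ i - 1), x ≤ kk :=
          ⟨_, Finset.max'_mem _ hKne, fun x hx => Finset.le_max' _ x hx⟩
        rw [Finset.mem_filter, Finset.mem_Ico] at hkkmem
        obtain ⟨⟨hak, hkb⟩, hSkk⟩ := hkkmem
        have hnext : i ≤ Sp (kk + 1) := by
          by_cases h : kk + 1 = b
          · rw [h]; omega
          · by_contra hcon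
            push_neg at hcon
            have := hkkmax (kk + 1) (Finset.mem_filter.mpr
              ⟨Finset.mem_Ico.mpr ⟨by omega, by omega⟩, by omega⟩)
            omega
        have hstepk := hstep kk
        have hlayk := hlaydef kk
        rcases hepm kk with h | h
        · exact hcross kk (by omega) hkb (by omega)
        · omega
    · -- nonempty layer
      exact (hζsupp i (g k1)).mpr ⟨hgsupp k1 hk1n, by rw [hlayF k1 hk1n, hk1]⟩
  · -- cardinality bound
    set R := (Finset.range (n + 1)).image Sp with hR
    have hRne : R.Nonempty :=
      ⟨Sp 0, Finset.mem_image_of_mem Sp (Finset.mem_range.mpr (by omega))⟩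
    set Mz := R.max' hRne with hMz
    set mz := R.min' hRne with hmz
    have hSub : ∀ k, k ≤ n → mz ≤ Sp k ∧ Sp k ≤ Mz := by
      intro k hk
      have hmemR : Sp k ∈ R := Finset.mem_image_of_mem Sp (Finset.mem_range.mpr (by omega))
      exact ⟨R.min'_le _ hmemR, R.le_max' _ hmemR⟩
    have hLsub : L ⊆ Finset.Icc (mz + 1) Mz := by
      intro i hi
      obtain ⟨k, hkr, rfl⟩ := Finset.mem_image.mp hi
      have hk : k < n := Finset.mem_range.mp hkr
      have h1 := hSub k hk.le
      have h2 := hSub (k + 1) hk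
      have h3 := hstep k
      have h4 := hlaydef k
      rw [Finset.mem_Icc]
      rcases hepm k with h | h <;> omega
    have hcard1 : L.card ≤ (Mz - mz).toNat := by
      refine le_trans (Finset.card_le_card hLsub) ?_
      rw [Int.card_Icc]
      omega
    obtain ⟨kM, hkMr, hkM⟩ := Finset.mem_image.mp (R.max'_mem hRne)
    obtain ⟨km, hkmr, hkm⟩ := Finset.mem_image.mp (R.min'_mem hRne)
    have hkMn : kM ≤ n := by
      have := Finset.mem_range.mp hkMr; omega
    have hkmn : km ≤ n := by
      have := Finset.mem_range.mp hkmr; omega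
    have hn1 : 1 ≤ n := by omega
    have hMm : mz < Mz := by
      have h0 := hSub 0 (by omega)
      have h1 := hSub 1 hn1
      have h2 : Sp 1 = Sp 0 + e 0 := by simpa using hstep 0
      rcases hepm 0 with h | h <;> omega
    have hbdd2 : BddAbove {x | ∃ a b : ℝ, 0 ≤ a ∧ a ≤ b ∧ b ≤ T ∧
        x = |∑ᶠ t ∈ Set.Icc a b, η t|} := by
      refine ⟨(n : ℝ), ?_⟩
      rintro x ⟨a, b, _, _, _, rfl⟩
      rw [finsum_Icc_eq' η hev.1]
      calc |∑ t ∈ hev.1.toFinset.filter (· ∈ Set.Icc a b), η t|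
          ≤ ∑ t ∈ hev.1.toFinset.filter (· ∈ Set.Icc a b), |η t| :=
            Finset.abs_sum_le_sum_abs _ _
        _ ≤ ∑ _t ∈ hev.1.toFinset.filter (· ∈ Set.Icc a b), (1 : ℝ) := by
            apply Finset.sum_le_sum
            intro t ht
            have htsupp : t ∈ Function.support η := by
              have := (Finset.mem_filter.mp ht).1
              rwa [Set.Finite.mem_toFinset] at this
            rcases hpm t htsupp with h | h <;> rw [h] <;> norm_num
        _ = ((hev.1.toFinset.filter (· ∈ Set.Icc a b)).card : ℝ) := by
            rw [Finset.sum_const, nsmul_eq_mul, mul_one]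
        _ ≤ (n : ℝ) := by
            exact_mod_cast Finset.card_filter_le _ _
    have key : ∀ u v : ℕ, u < v → v ≤ n →
        ((|Sp v - Sp u| : ℤ) : ℝ) ∈ {x | ∃ a b : ℝ, 0 ≤ a ∧ a ≤ b ∧ b ≤ T ∧
          x = |∑ᶠ t ∈ Set.Icc a b, η t|} := by
      intro u v huv hvn
      have hun : u < n := lt_of_lt_of_le huv hvn
      have hv1 : v - 1 < n := by omega
      have hguIcc : g u ∈ Set.Icc 0 T := hev.2 (Function.mem_support.mpr (hgsupp u hun))
      have hgvIcc : g (v - 1) ∈ Set.Icc 0 T :=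
        hev.2 (Function.mem_support.mpr (hgsupp _ hv1))
      refine ⟨g u, g (v - 1), hguIcc.1, hmono' u (v - 1) (by omega) hv1, hgvIcc.2, ?_⟩
      rw [finsum_Icc_eq' η hev.1]
      have hset : hev.1.toFinset.filter (· ∈ Set.Icc (g u) (g (v - 1)))
          = (Finset.Ico u v).image g := by
        ext t
        simp only [Finset.mem_filter, Set.Finite.mem_toFinset, Function.mem_support,
          Set.mem_Icc, Finset.mem_image, Finset.mem_Ico]
        constructor
        · rintro ⟨hηt, h1, h2⟩
          obtain ⟨k, hkn, rfl⟩ := (hmem t).mp hηt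
          refine ⟨k, ⟨?_, ?_⟩, rfl⟩
          · by_contra h
            push_neg at h
            exact absurd h1 (not_le.mpr (hmono k u h hun))
          · by_contra h
            push_neg at h
            exact absurd h2 (not_le.mpr (hmono (v - 1) k (by omega) hkn))
        · rintro ⟨k, ⟨hk1, hk2⟩, rfl⟩
          have hkn : k < n := lt_of_lt_of_le hk2 hvn
          exact ⟨hgsupp k hkn, hmono' u k hk1 hkn, hmono' k (v - 1) (by omega) hv1⟩
      rw [hset, Finset.sum_image (fun x hx y hy hxy =>
        hinj x y (lt_of_lt_of_le (Finset.mem_Ico.mp hx).2 hvn)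
          (lt_of_lt_of_le (Finset.mem_Ico.mp hy).2 hvn) hxy)]
      have hsum1 : ∑ k ∈ Finset.Ico u v, η (g k) = ((∑ k ∈ Finset.Ico u v, e k : ℤ) : ℝ) := by
        push_cast
        refine Finset.sum_congr rfl fun k hk => ?_
        exact (hcast k (lt_of_lt_of_le (Finset.mem_Ico.mp hk).2 hvn)).symm
      have hsum2 : ∑ k ∈ Finset.Ico u v, e k = Sp v - Sp u := by
        rw [hSpdef v, hSpdef u, Finset.sum_Ico_eq_sub _ (le_of_lt huv)]
      rw [hsum1, hsum2, ← Int.cast_abs]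
    have hD : ((Mz - mz : ℤ) : ℝ) ≤ discNorm T η := by
      have hne' : km ≠ kM := by
        intro h
        rw [h, hkM] at hkm
        omega
      rcases Nat.lt_or_ge km kM with h | h
      · have h2 := key km kM h hkMn
        rw [hkm, hkM, abs_of_nonneg (by omega : (0:ℤ) ≤ Mz - mz)] at h2
        exact le_csSup hbdd2 h2
      · have hlt : kM < km := by omega
        have h2 := key kM km hlt hkmn
        rw [hkm, hkM, abs_sub_comm, abs_of_nonneg (by omega : (0:ℤ) ≤ Mz - mz)] at h2
        exact le_csSup hbdd2 h2
    have htn : ((Mz - mz).toNat : ℝ) = ((Mz - mz : ℤ) : ℝ) := by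
      have h1 : ((Mz - mz).toNat : ℤ) = Mz - mz := Int.toNat_of_nonneg (by omega)
      exact_mod_cast congrArg (fun z : ℤ => (z : ℝ)) h1
    calc (L.card : ℝ) ≤ ((Mz - mz).toNat : ℝ) := Nat.cast_le.mpr hcard1
      _ = ((Mz - mz : ℤ) : ℝ) := htn
      _ ≤ discNorm T η := hD

/-- if `A = sup{‖ζ‖ : ζ ±1-valued event sequence with ‖ζ‖_D = 1}` is finite
(i.e. the set is bounded above), then `‖η‖ ≤ A·‖η‖_D` for every ±1-valued event sequence. -/
theorem stmt4 (T : ℝ) (hT : 0 < T) (p : Seminorm ℝ (ℝ → ℝ)) (S : Set ℝ)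
    (hS : S = {x | ∃ ζ : ℝ → ℝ, IsEventSeq T ζ ∧ IsPM ζ ∧ discNorm T ζ = 1 ∧ x = p ζ})
    (hbdd : BddAbove S) :
    ∀ η : ℝ → ℝ, IsEventSeq T η → IsPM η → p η ≤ sSup S * discNorm T η := by
  intro η hev hpm
  by_cases hz : ∀ t, η t = 0
  · have hη0 : η = 0 := funext fun t => hz t
    have hd : discNorm T η = 0 := by
      rw [hη0]
      have hset : {x | ∃ a b : ℝ, 0 ≤ a ∧ a ≤ b ∧ b ≤ T ∧
          x = |∑ᶠ t ∈ Set.Icc a b, (0 : ℝ → ℝ) t|} = {(0 : ℝ)} := by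
        ext x
        simp only [Set.mem_setOf_eq, Set.mem_singleton_iff]
        constructor
        · rintro ⟨a, b, _, _, _, rfl⟩
          simp [finsum_mem_zero]
        · rintro rfl
          exact ⟨0, 0, le_refl _, le_refl _, hT.le, by simp [finsum_mem_zero]⟩
      unfold discNorm
      rw [hset, csSup_singleton]
    rw [hd, mul_zero, hη0, map_zero]
  · push_neg at hz
    obtain ⟨t0, ht0⟩ := hz
    obtain ⟨L, ζ, hLne, hsum, hprop, hcard⟩ := decomp' T η hev hpm t0 ht0
    have hA : ∀ i ∈ L, p (ζ i) ≤ sSup S := by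
      intro i hi
      obtain ⟨hev', hpm', halt', s0, hs0⟩ := hprop i hi
      apply le_csSup hbdd
      rw [hS]
      exact ⟨ζ i, hev', hpm', discNorm_alt' T (ζ i) hev' hpm' halt' s0 hs0, rfl⟩
    have hA0 : 0 ≤ sSup S := by
      obtain ⟨i0, hi0⟩ := hLne
      exact le_trans (apply_nonneg p (ζ i0)) (hA i0 hi0)
    calc p η = p (∑ i ∈ L, ζ i) := by rw [← hsum]
      _ ≤ ∑ i ∈ L, p (ζ i) := seminorm_sum_le' p L ζ
      _ ≤ ∑ _i ∈ L, sSup S := Finset.sum_le_sum hA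
      _ = (L.card : ℝ) * sSup S := by rw [Finset.sum_const, nsmul_eq_mul]
      _ ≤ discNorm T η * sSup S := mul_le_mul_of_nonneg_right hcard hA0
      _ = sSup S * discNorm T η := mul_comm _ _
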